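/- Let q(x) = q₁x + q₂x² mod N be a quadratic permutation polynomial with gcd of relevance g = gcd(2q₂,N), and let O = {(k₀(i), k₁(i)) : i = 0,…,g−1} with k₀(i) = iN/g and k₁(i) = q₁k₀(i) − q₂k₀(i)², be the orbit of (0,0). Then any two distinct points p, p' ∈ O satisfy δ_N(p,p') ≥ 2N/g, where δ_N is the two-dimensional Lee metric. -/
import Mathlib


/-- Lee distance on ℤ_N: |a−b|_N = min((a−b) mod N, (b−a) mod N). -/
def leeDist {N : ℕ} (a b : ZMod N) : ℕ := min (a - b).val (b - a).val

/-- Two-dimensional Lee metric on ℤ_N². -/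
def leeDist2 {N : ℕ} (p p' : ZMod N × ZMod N) : ℕ :=
  leeDist p.1 p'.1 + leeDist p.2 p'.2

lemma dvd_val_of_mul {N d : ℕ} (hN : 0 < N) (hd : d ∣ N) (hdpos : 0 < d)
    (x y : ZMod N) (h : x = (d : ZMod N) * y) : d ∣ x.val := by
  haveI : NeZero N := ⟨hN.ne'⟩
  haveI : NeZero d := ⟨hdpos.ne'⟩
  have h1 : ((x.val : ℕ) : ZMod d) = 0 := by
    have h2 := congrArg (ZMod.castHom hd (ZMod d)) h
    rw [map_mul, map_natCast, ZMod.natCast_self, zero_mul, ZMod.castHom_apply] at h2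
    rw [ZMod.natCast_val, h2]
  exact (ZMod.natCast_eq_zero_iff _ _).mp h1

lemma lee_ge {N d : ℕ} (hN : 0 < N) (hd : d ∣ N) (hdpos : 0 < d)
    (a b : ZMod N) (hne : a ≠ b) (y : ZMod N) (h : a - b = (d : ZMod N) * y) :
    d ≤ leeDist a b := by
  haveI : NeZero N := ⟨hN.ne'⟩
  have hab : a - b ≠ 0 := sub_ne_zero.mpr hne
  have hba : b - a ≠ 0 := sub_ne_zero.mpr hne.symm
  have d1 : d ∣ (a - b).val := dvd_val_of_mul hN hd hdpos _ y h
  have d2 : d ∣ (b - a).val := by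
    refine dvd_val_of_mul hN hd hdpos _ (-y) ?_
    rw [mul_neg, ← h]; ring
  have v1 : (a - b).val ≠ 0 := fun hv => hab ((ZMod.val_eq_zero _).mp hv ▸ rfl)
  have v2 : (b - a).val ≠ 0 := fun hv => hba ((ZMod.val_eq_zero _).mp hv ▸ rfl)
  exact le_min (Nat.le_of_dvd (Nat.pos_of_ne_zero v1) d1)
    (Nat.le_of_dvd (Nat.pos_of_ne_zero v2) d2)

/-- For a QPP q(x) = q₁x + q₂x² with g = gcd(2q₂,N), any two distinct
points of the orbit O of (0,0) are at Lee distance at least 2N/g. -/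
theorem orbit_separation (N : ℕ) (hN : 0 < N) (q₁ q₂ : ℕ)
    (hperm : Function.Bijective
      (fun x : ZMod N => (q₁ : ZMod N) * x + (q₂ : ZMod N) * x ^ 2)) :
    let g : ℕ := Nat.gcd (2 * q₂) N
    let k₀ : ℕ → ZMod N := fun i => ((i * (N / g) : ℕ) : ZMod N)
    let k₁ : ℕ → ZMod N := fun i => (q₁ : ZMod N) * k₀ i - (q₂ : ZMod N) * (k₀ i) ^ 2
    let O : Set (ZMod N × ZMod N) := {p | ∃ i < g, p = (k₀ i, k₁ i)}
    ∀ p ∈ O, ∀ p' ∈ O, p ≠ p' → 2 * (N / g) ≤ leeDist2 p p' := by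
  intro g k₀ k₁ O p hp p' hp' hne
  haveI : NeZero N := ⟨hN.ne'⟩
  obtain ⟨i, hi, rfl⟩ := hp
  obtain ⟨j, hj, rfl⟩ := hp'
  have hgN : g ∣ N := Nat.gcd_dvd_right _ _
  have hgq : g ∣ 2 * q₂ := Nat.gcd_dvd_left _ _
  have hgpos : 0 < g := Nat.gcd_pos_of_pos_right _ hN
  set d : ℕ := N / g with hdef
  have hdN : d ∣ N := Nat.div_dvd_of_dvd hgN
  have hdpos : 0 < d := Nat.div_pos (Nat.le_of_dvd hN hgN) hgpos
  -- cast forms of k₀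
  have ek : ∀ m : ℕ, k₀ m = (d : ZMod N) * (m : ZMod N) := by
    intro m; simp only [k₀]; push_cast; ring
  -- k₀ i ≠ k₀ j
  have h0 : k₀ i ≠ k₀ j := by
    intro h
    apply hne
    have h1 : k₁ i = k₁ j := by simp only [k₁, h]
    rw [h, h1]
  -- 2*q₂*k₀ m = 0
  have hz : ∀ m : ℕ, (2 * q₂ : ZMod N) * k₀ m = 0 := by
    intro m
    obtain ⟨c, hc⟩ := hgq
    have : ((2 * q₂ * (m * d) : ℕ) : ZMod N) = 0 := by
      rw [ZMod.natCast_eq_zero_iff]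
      refine ⟨c * m, ?_⟩
      calc 2 * q₂ * (m * d) = (g * c) * (m * d) := by rw [← hc]
        _ = (g * d) * (c * m) := by ring
        _ = N * (c * m) := by rw [Nat.mul_div_cancel' hgN]
    simp only [k₀]
    push_cast at this ⊢
    linear_combination this
  -- k₁ m = q(k₀ m)
  have hk1 : ∀ m : ℕ, k₁ m = (q₁ : ZMod N) * k₀ m + (q₂ : ZMod N) * (k₀ m) ^ 2 := by
    intro m
    have := hz m
    simp only [k₁]
    push_cast at this
    linear_combination (-(k₀ m)) * this
  -- k₁ i ≠ k₁ j by injectivity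
  have h1 : k₁ i ≠ k₁ j := by
    rw [hk1 i, hk1 j]
    intro h
    exact h0 (hperm.injective h)
  -- multiples of d
  have m0 : k₀ i - k₀ j = (d : ZMod N) * ((i : ZMod N) - (j : ZMod N)) := by
    rw [ek i, ek j]; ring
  have m1 : k₁ i - k₁ j = (d : ZMod N) *
      (((i : ZMod N) - (j : ZMod N)) * ((q₁ : ZMod N) - (q₂ : ZMod N) * (k₀ i + k₀ j))) := by
    simp only [k₁]
    rw [ek i, ek j]
    ring
  have b0 : d ≤ leeDist (k₀ i) (k₀ j) := lee_ge hN hdN hdpos _ _ h0 _ m0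
  have b1 : d ≤ leeDist (k₁ i) (k₁ j) := lee_ge hN hdN hdpos _ _ h1 _ m1
  simp only [leeDist2]
  omega
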